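/- Let G, O ⊆ V be finite sets with |G| = |O|. Then there exists a bijection σ : G → O such that for every g ∈ G, either g and σ(g) have the same color, or, writing c₁ for the color of g and c₂ for the color of σ(g), both |G ∩ V_{c₁}| > |O ∩ V_{c₁}| and |G ∩ V_{c₂}| < |O ∩ V_{c₂}| hold. -/

import Mathlib

open Finset

private lemma color_matching_aux {α : Type*} [DecidableEq α] {C : ℕ}
    (Vc : Fin C → Finset α)
    (hdisj : ∀ c d : Fin C, c ≠ d → Disjoint (Vc c) (Vc d)) :
    ∀ n (G O : Finset α), G.card = n → G.card = O.card →
    ∃ σ : G → O, Function.Bijective σ ∧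
      ∀ g : G,
        (∃ c, (g : α) ∈ Vc c ∧ ((σ g : α)) ∈ Vc c) ∨
        (∀ c₁ c₂ : Fin C, (g : α) ∈ Vc c₁ → ((σ g : α)) ∈ Vc c₂ →
          (O ∩ Vc c₁).card < (G ∩ Vc c₁).card ∧ (G ∩ Vc c₂).card < (O ∩ Vc c₂).card) := by
  intro n
  induction n with
  | zero =>
      intro G O hn hcard
      refine ⟨Finset.equivOfCardEq hcard, (Finset.equivOfCardEq hcard).bijective, ?_⟩
      rintro ⟨g, hg⟩
      exact absurd hg (by simp [Finset.card_eq_zero.mp hn])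
  | succ n ih =>
      intro G O hn hcard
      by_cases hex : ∃ c, ((G ∩ Vc c).Nonempty ∧ (O ∩ Vc c).Nonempty)
      · obtain ⟨c, ⟨g, hgc⟩, ⟨o, hoc⟩⟩ := hex
        have hgG : g ∈ G := (mem_inter.mp hgc).1
        have hgVc : g ∈ Vc c := (mem_inter.mp hgc).2
        have hoO : o ∈ O := (mem_inter.mp hoc).1
        have hoVc : o ∈ Vc c := (mem_inter.mp hoc).2
        have hGcard : (G.erase g).card = n := by
          rw [card_erase_of_mem hgG, hn]; omega
        have hOcard : (G.erase g).card = (O.erase o).card := by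
          rw [card_erase_of_mem hgG, card_erase_of_mem hoO, hcard]
        obtain ⟨σ', hbij', hprop'⟩ := ih (G.erase g) (O.erase o) hGcard hOcard
        have hcount : ∀ (S : Finset α) (s : α), s ∈ S → s ∈ Vc c → ∀ d : Fin C,
            (S.erase s ∩ Vc d).card = if d = c then (S ∩ Vc d).card - 1 else (S ∩ Vc d).card := by
          intro S s hsS hsVc d
          by_cases hdc : d = c
          · subst hdc
            simp [erase_inter, card_erase_of_mem (mem_inter.mpr ⟨hsS, hsVc⟩)]
          · have hnot : s ∉ Vc d := fun h => (Finset.disjoint_left.mp (hdisj d c hdc)) h hsVc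
            rw [erase_inter, if_neg hdc,
              Finset.erase_eq_of_notMem (fun hm => hnot (mem_inter.mp hm).2)]
        classical
        refine ⟨fun x => if h : (x : α) = g then ⟨o, hoO⟩ else
          ⟨σ' ⟨x, mem_erase.mpr ⟨h, x.2⟩⟩, erase_subset _ _ (σ' _).2⟩, ?_, ?_⟩
        · constructor
          · rintro ⟨x, hx⟩ ⟨y, hy⟩ hxy
            beta_reduce at hxy
            by_cases hxg : x = g <;> by_cases hyg : y = g
            · exact Subtype.ext (hxg.trans hyg.symm)
            · exfalso
              rw [dif_pos hxg, dif_neg hyg] at hxy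
              have hm : (σ' ⟨y, mem_erase.mpr ⟨hyg, hy⟩⟩ : α) ∈ O.erase o :=
                (σ' ⟨y, mem_erase.mpr ⟨hyg, hy⟩⟩).2
              have ho' : (σ' ⟨y, mem_erase.mpr ⟨hyg, hy⟩⟩ : α) = o :=
                (congrArg Subtype.val hxy).symm
              simp [ho'] at hm
            · exfalso
              rw [dif_neg hxg, dif_pos hyg] at hxy
              have hm : (σ' ⟨x, mem_erase.mpr ⟨hxg, hx⟩⟩ : α) ∈ O.erase o :=
                (σ' ⟨x, mem_erase.mpr ⟨hxg, hx⟩⟩).2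
              have ho' : (σ' ⟨x, mem_erase.mpr ⟨hxg, hx⟩⟩ : α) = o :=
                congrArg Subtype.val hxy
              simp [ho'] at hm
            · rw [dif_neg hxg, dif_neg hyg] at hxy
              simp only [Subtype.mk.injEq] at hxy ⊢
              have heq := hbij'.1 (Subtype.ext hxy)
              exact congrArg Subtype.val heq
          · rintro ⟨y, hy⟩
            by_cases hyo : y = o
            · exact ⟨⟨g, hgG⟩, by simp [hyo]⟩
            · obtain ⟨⟨x, hx⟩, hxe⟩ := hbij'.2 ⟨y, mem_erase.mpr ⟨hyo, hy⟩⟩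
              have hxg : x ≠ g := (mem_erase.mp hx).1
              refine ⟨⟨x, (mem_erase.mp hx).2⟩, ?_⟩
              simp only [dif_neg hxg, Subtype.mk.injEq]
              exact congrArg Subtype.val hxe
        · rintro ⟨x, hx⟩
          by_cases hxg : x = g
          · left
            exact ⟨c, by simpa [hxg] using hgVc, by simp [hxg, hoVc]⟩
          · simp only [dif_neg hxg]
            rcases hprop' ⟨x, mem_erase.mpr ⟨hxg, hx⟩⟩ with ⟨d, h1, h2⟩ | h
            · exact Or.inl ⟨d, h1, h2⟩
            · right
              intro c₁ c₂ h1 h2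
              obtain ⟨ha, hb⟩ := h c₁ c₂ h1 h2
              rw [hcount O o hoO hoVc c₁, hcount G g hgG hgVc c₁] at ha
              rw [hcount O o hoO hoVc c₂, hcount G g hgG hgVc c₂] at hb
              have hG1 : 0 < (G ∩ Vc c).card := card_pos.mpr ⟨g, hgc⟩
              have hO1 : 0 < (O ∩ Vc c).card := card_pos.mpr ⟨o, hoc⟩
              constructor
              · rcases eq_or_ne c₁ c with rfl | h'
                · simp only [eq_self_iff_true, if_true] at ha; omega
                · simp only [if_neg h'] at ha; exact ha
              · rcases eq_or_ne c₂ c with rfl | h'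
                · simp only [eq_self_iff_true, if_true] at hb; omega
                · simp only [if_neg h'] at hb; exact hb
      · push_neg at hex
        refine ⟨Finset.equivOfCardEq hcard, (Finset.equivOfCardEq hcard).bijective, ?_⟩
        rintro ⟨g, hg⟩
        right
        intro c₁ c₂ h1 h2
        have hG1 : (G ∩ Vc c₁).Nonempty := ⟨g, mem_inter.mpr ⟨hg, h1⟩⟩
        have hO2 : (O ∩ Vc c₂).Nonempty :=
          ⟨_, mem_inter.mpr ⟨(Finset.equivOfCardEq hcard ⟨g, hg⟩).2, h2⟩⟩
        have hO1 : ¬(O ∩ Vc c₁).Nonempty := fun h => (nonempty_iff_ne_empty.mp h) (hex c₁ hG1)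
        have hG2 : ¬(G ∩ Vc c₂).Nonempty := fun h => (nonempty_iff_ne_empty.mp hO2) (hex c₂ h)
        rw [not_nonempty_iff_eq_empty] at hO1 hG2
        simp [hO1, hG2, card_pos, hG1, hO2]

/-- Given equal-cardinality subsets `G, O` of a colored ground set `V`, there is a bijection
`σ : G → O` such that every `g` is matched either to an element of the same color, or to an
element whose color is strictly under-represented in `G` relative to `O`, while the color of
`g` is strictly over-represented in `G` relative to `O`. -/
theorem color_matching {α : Type*} [DecidableEq α] (C : ℕ) (V : Finset α)
    (Vc : Fin C → Finset α)
    (hV : V = Finset.univ.biUnion Vc)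
    (hdisj : ∀ c d : Fin C, c ≠ d → Disjoint (Vc c) (Vc d))
    (G O : Finset α) (hG : G ⊆ V) (hO : O ⊆ V) (hcard : G.card = O.card) :
    ∃ σ : G → O, Function.Bijective σ ∧
      ∀ g : G,
        (∃ c, (g : α) ∈ Vc c ∧ ((σ g : α)) ∈ Vc c) ∨
        (∀ c₁ c₂ : Fin C, (g : α) ∈ Vc c₁ → ((σ g : α)) ∈ Vc c₂ →
          (O ∩ Vc c₁).card < (G ∩ Vc c₁).card ∧ (G ∩ Vc c₂).card < (O ∩ Vc c₂).card) :=
  color_matching_aux Vc hdisj G.card G O rfl hcard
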